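/- Deterministic low-rank approximation transfer (from the proof of Theorem 3): let A, Â, M be real n×m matrices with rank(M) ≤ K and rank(Â) ≤ K, and suppose ‖A − Â‖₂ ≤ C₁ · inf{ ‖A − X‖₂ : X an n×m real matrix with rank(X) ≤ K } for some constant C₁ ≥ 0, where ‖·‖₂ is the spectral norm. Then ‖M − Â‖_F² ≤ 4K·(1 + C₁²)·‖A − M‖₂², where ‖·‖_F is the Frobenius norm. -/

import Mathlib

open Finset

/-- The spectral (operator `ℓ² → ℓ²`) norm of a real matrix, defined as the supremum of
`‖X x‖₂` over vectors `x` with `‖x‖₂ ≤ 1`. -/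
noncomputable def specNorm {n m : ℕ} (X : Matrix (Fin n) (Fin m) ℝ) : ℝ :=
  sSup { r | ∃ x : Fin m → ℝ, (∑ j, x j ^ 2) ≤ 1 ∧
    r = Real.sqrt (∑ i, (∑ j, X i j * x j) ^ 2) }

/-- Squared Frobenius norm of a real matrix. -/
def frobSq {n m : ℕ} (X : Matrix (Fin n) (Fin m) ℝ) : ℝ :=
  ∑ i, ∑ j, X i j ^ 2

section aux

open Matrix

variable {n m : ℕ}

/-- The set whose supremum defines `specNorm`. -/
def specSet (X : Matrix (Fin n) (Fin m) ℝ) : Set ℝ :=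
  { r | ∃ x : Fin m → ℝ, (∑ j, x j ^ 2) ≤ 1 ∧
    r = Real.sqrt (∑ i, (∑ j, X i j * x j) ^ 2) }

lemma specNorm_eq (X : Matrix (Fin n) (Fin m) ℝ) : specNorm X = sSup (specSet X) := rfl

lemma zero_mem_specSet (X : Matrix (Fin n) (Fin m) ℝ) : (0 : ℝ) ∈ specSet X := by
  refine ⟨0, by simp, ?_⟩
  simp

lemma specSet_nonempty (X : Matrix (Fin n) (Fin m) ℝ) : (specSet X).Nonempty :=
  ⟨0, zero_mem_specSet X⟩

lemma bddAbove_specSet (X : Matrix (Fin n) (Fin m) ℝ) : BddAbove (specSet X) := by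
  refine ⟨Real.sqrt (frobSq X), ?_⟩
  rintro r ⟨x, hx, rfl⟩
  apply Real.sqrt_le_sqrt
  unfold frobSq
  apply Finset.sum_le_sum
  intro i _
  calc (∑ j, X i j * x j) ^ 2 ≤ (∑ j, X i j ^ 2) * ∑ j, x j ^ 2 :=
        Finset.sum_mul_sq_le_sq_mul_sq _ _ _
    _ ≤ (∑ j, X i j ^ 2) * 1 := by
        apply mul_le_mul_of_nonneg_left hx
        positivity
    _ = ∑ j, X i j ^ 2 := mul_one _

lemma specNorm_nonneg (X : Matrix (Fin n) (Fin m) ℝ) : 0 ≤ specNorm X :=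
  le_csSup (bddAbove_specSet X) (zero_mem_specSet X)

lemma le_specNorm (X : Matrix (Fin n) (Fin m) ℝ) (x : Fin m → ℝ) (hx : (∑ j, x j ^ 2) ≤ 1) :
    Real.sqrt (∑ i, (∑ j, X i j * x j) ^ 2) ≤ specNorm X :=
  le_csSup (bddAbove_specSet X) ⟨x, hx, rfl⟩

lemma sum_sq_le_specNorm_sq (X : Matrix (Fin n) (Fin m) ℝ) (x : Fin m → ℝ)
    (hx : (∑ j, x j ^ 2) ≤ 1) :
    (∑ i, (∑ j, X i j * x j) ^ 2) ≤ specNorm X ^ 2 := by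
  have h := le_specNorm X x hx
  have hnn : (0:ℝ) ≤ ∑ i, (∑ j, X i j * x j) ^ 2 := by positivity
  calc (∑ i, (∑ j, X i j * x j) ^ 2)
      = Real.sqrt (∑ i, (∑ j, X i j * x j) ^ 2) ^ 2 := (Real.sq_sqrt hnn).symm
    _ ≤ specNorm X ^ 2 := by
        apply pow_le_pow_left₀ (Real.sqrt_nonneg _) h _

/-- Minkowski for finite sums of squares. -/
lemma sqrt_sum_sq_add_le (a b : Fin n → ℝ) :
    Real.sqrt (∑ i, (a i + b i) ^ 2) ≤
      Real.sqrt (∑ i, a i ^ 2) + Real.sqrt (∑ i, b i ^ 2) := by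
  have key : ∀ c : Fin n → ℝ,
      Real.sqrt (∑ i, c i ^ 2) = ‖(WithLp.equiv 2 (Fin n → ℝ)).symm c‖ := by
    intro c
    rw [EuclideanSpace.norm_eq]
    congr 1
    apply Finset.sum_congr rfl
    intro i _
    simp [Real.norm_eq_abs, sq_abs]
  have h1 : (fun i => a i + b i) = fun i =>
      ((WithLp.equiv 2 (Fin n → ℝ)).symm a + (WithLp.equiv 2 (Fin n → ℝ)).symm b) i := by
    funext i; rfl
  rw [key a, key b, key (fun i => a i + b i)]
  have h2 : (WithLp.equiv 2 (Fin n → ℝ)).symm (fun i => a i + b i)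
      = (WithLp.equiv 2 (Fin n → ℝ)).symm a + (WithLp.equiv 2 (Fin n → ℝ)).symm b := rfl
  rw [h2]
  exact norm_add_le _ _

lemma specNorm_sub_le (A B C : Matrix (Fin n) (Fin m) ℝ) :
    specNorm (A - C) ≤ specNorm (A - B) + specNorm (B - C) := by
  rw [specNorm_eq]
  apply csSup_le (specSet_nonempty _)
  rintro r ⟨x, hx, rfl⟩
  have hsum : ∀ i, (∑ j, (A - C) i j * x j)
      = (∑ j, (A - B) i j * x j) + (∑ j, (B - C) i j * x j) := by
    intro i
    rw [← Finset.sum_add_distrib]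
    apply Finset.sum_congr rfl
    intro j _
    simp [Matrix.sub_apply]
    ring
  calc Real.sqrt (∑ i, (∑ j, (A - C) i j * x j) ^ 2)
      = Real.sqrt (∑ i, ((∑ j, (A - B) i j * x j) + (∑ j, (B - C) i j * x j)) ^ 2) := by
        congr 1; exact Finset.sum_congr rfl fun i _ => by rw [hsum i]
    _ ≤ Real.sqrt (∑ i, (∑ j, (A - B) i j * x j) ^ 2)
        + Real.sqrt (∑ i, (∑ j, (B - C) i j * x j) ^ 2) := sqrt_sum_sq_add_le _ _
    _ ≤ specNorm (A - B) + specNorm (B - C) :=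
        add_le_add (le_specNorm _ _ hx) (le_specNorm _ _ hx)

/-- rank subadditivity for subtraction. -/
lemma rank_sub_le (A B : Matrix (Fin n) (Fin m) ℝ) :
    (A - B).rank ≤ A.rank + B.rank := by
  classical
  have hmv : (A - B).mulVecLin = A.mulVecLin - B.mulVecLin := by
    ext x i
    simp [Matrix.mulVecLin_apply, Matrix.sub_mulVec]
  have hle : LinearMap.range (A - B).mulVecLin ≤
      LinearMap.range A.mulVecLin ⊔ LinearMap.range B.mulVecLin := by
    rw [hmv]
    rintro y ⟨x, rfl⟩
    exact Submodule.sub_mem _ (Submodule.mem_sup_left ⟨x, rfl⟩)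
      (Submodule.mem_sup_right ⟨x, rfl⟩)
  calc (A - B).rank
      ≤ Module.finrank ℝ
        (LinearMap.range A.mulVecLin ⊔ LinearMap.range B.mulVecLin : Submodule ℝ (Fin n → ℝ)) :=
        Submodule.finrank_mono hle
    _ ≤ A.rank + B.rank := Submodule.finrank_add_le_finrank_add_finrank _ _

/-- Frobenius norm squared is at most rank times spectral norm squared. -/
lemma frobSq_le_rank_mul (X : Matrix (Fin n) (Fin m) ℝ) :
    frobSq X ≤ (X.rank : ℝ) * specNorm X ^ 2 := by
  classical
  set e := (WithLp.linearEquiv 2 ℝ (Fin m → ℝ)).symm with he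
  set W : Submodule ℝ (EuclideanSpace ℝ (Fin m)) :=
    Submodule.map e.toLinearMap (LinearMap.range X.transpose.mulVecLin) with hW
  have hrank : Module.finrank ℝ W = X.rank := by
    rw [hW, LinearEquiv.finrank_map_eq]
    rw [← Matrix.rank_transpose X]
    rfl
  -- the rows of X belong to W
  have hrow : ∀ i : Fin n, ((WithLp.equiv 2 (Fin m → ℝ)).symm (fun j => X i j)) ∈ W := by
    intro i
    refine ⟨X.transpose *ᵥ Pi.single i 1, ⟨Pi.single i 1, rfl⟩, ?_⟩
    have : X.transpose *ᵥ Pi.single i 1 = fun j => X i j := by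
      funext j
      simp [Matrix.mulVec_single]
    rw [this]
    rfl
  set w : Fin n → W := fun i => ⟨_, hrow i⟩ with hw
  set b := stdOrthonormalBasis ℝ W with hb
  -- Parseval for each row
  have hpars : ∀ i : Fin n, (∑ j, X i j ^ 2)
      = ∑ k, (∑ j, ((b k : EuclideanSpace ℝ (Fin m)) j) * X i j) ^ 2 := by
    intro i
    have h1 : (∑ j, X i j ^ 2) = ‖(w i : EuclideanSpace ℝ (Fin m))‖ ^ 2 := by
      rw [EuclideanSpace.norm_eq, Real.sq_sqrt (by positivity)]
      apply Finset.sum_congr rfl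
      intro j _
      simp [Real.norm_eq_abs, sq_abs]
      rfl
    have h2 : ‖(w i : EuclideanSpace ℝ (Fin m))‖ = ‖w i‖ := rfl
    have h3 : ‖w i‖ = ‖b.repr (w i)‖ := (b.repr.norm_map (w i)).symm
    have h4 : ‖b.repr (w i)‖ ^ 2 = ∑ k, (b.repr (w i) k) ^ 2 := by
      rw [EuclideanSpace.norm_eq, Real.sq_sqrt (by positivity)]
      apply Finset.sum_congr rfl
      intro k _
      simp [Real.norm_eq_abs, sq_abs]
    have h5 : ∀ k, b.repr (w i) k
        = ∑ j, ((b k : EuclideanSpace ℝ (Fin m)) j) * X i j := by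
      intro k
      rw [b.repr_apply_apply]
      rw [Submodule.coe_inner]
      rw [PiLp.inner_apply]
      apply Finset.sum_congr rfl
      intro j _
      simp [RCLike.inner_apply]
      exact mul_comm _ _
    rw [h1, h2, h3, h4]
    apply Finset.sum_congr rfl
    intro k _
    rw [h5 k]
  -- each basis vector is a unit vector
  have hunit : ∀ k, (∑ j, ((b k : EuclideanSpace ℝ (Fin m)) j) ^ 2) ≤ 1 := by
    intro k
    have hn : ‖(b k : EuclideanSpace ℝ (Fin m))‖ = 1 := by
      have := b.orthonormal.1 k
      exact this
    have : (∑ j, ((b k : EuclideanSpace ℝ (Fin m)) j) ^ 2)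
        = ‖(b k : EuclideanSpace ℝ (Fin m))‖ ^ 2 := by
      rw [EuclideanSpace.norm_eq, Real.sq_sqrt (by positivity)]
      apply Finset.sum_congr rfl
      intro j _
      simp [Real.norm_eq_abs, sq_abs]
    rw [this, hn]
    norm_num
  calc frobSq X = ∑ i, ∑ k, (∑ j, ((b k : EuclideanSpace ℝ (Fin m)) j) * X i j) ^ 2 :=
        Finset.sum_congr rfl fun i _ => hpars i
    _ = ∑ k, ∑ i, (∑ j, X i j * ((b k : EuclideanSpace ℝ (Fin m)) j)) ^ 2 := by
        rw [Finset.sum_comm]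
        apply Finset.sum_congr rfl; intro k _
        apply Finset.sum_congr rfl; intro i _
        congr 1
        apply Finset.sum_congr rfl; intro j _
        ring
    _ ≤ ∑ _k : Fin (Module.finrank ℝ W), specNorm X ^ 2 :=
        Finset.sum_le_sum fun k _ => sum_sq_le_specNorm_sq X _ (hunit k)
    _ = (Module.finrank ℝ W : ℝ) * specNorm X ^ 2 := by
        rw [Finset.sum_const, Finset.card_univ, Fintype.card_fin, nsmul_eq_mul]
    _ = (X.rank : ℝ) * specNorm X ^ 2 := by rw [hrank]

end aux

/-- **Deterministic low-rank approximation transfer (from the proof of Theorem 3).**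
If `rank M ≤ K`, `rank Â ≤ K`, and `‖A − Â‖₂ ≤ C₁ · inf{‖A − X‖₂ : rank X ≤ K}`, then
`‖M − Â‖_F² ≤ 4K(1 + C₁²)‖A − M‖₂²`. -/
theorem statement19
    (n m K : ℕ) (A Ahat M : Matrix (Fin n) (Fin m) ℝ)
    (hM : M.rank ≤ K) (hAhat : Ahat.rank ≤ K)
    (C₁ : ℝ) (hC₁ : 0 ≤ C₁)
    (happrox : specNorm (A - Ahat) ≤
      C₁ * sInf { r | ∃ X : Matrix (Fin n) (Fin m) ℝ, X.rank ≤ K ∧ r = specNorm (A - X) }) :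
    frobSq (M - Ahat) ≤ 4 * K * (1 + C₁ ^ 2) * specNorm (A - M) ^ 2 := by
  set t := specNorm (A - M) with ht
  have htnn : 0 ≤ t := specNorm_nonneg _
  -- the infimum is at most t
  have hinf : sInf { r | ∃ X : Matrix (Fin n) (Fin m) ℝ, X.rank ≤ K ∧ r = specNorm (A - X) } ≤ t := by
    apply csInf_le
    · refine ⟨0, ?_⟩
      rintro r ⟨X, _, rfl⟩
      exact specNorm_nonneg _
    · exact ⟨M, hM, rfl⟩
  have hAAhat : specNorm (A - Ahat) ≤ C₁ * t :=
    happrox.trans (mul_le_mul_of_nonneg_left hinf hC₁)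
  -- triangle inequality: M - Ahat = (M - A) + (A - Ahat)
  have htri : specNorm (M - Ahat) ≤ specNorm (M - A) + specNorm (A - Ahat) :=
    specNorm_sub_le M A Ahat
  have hMA : specNorm (M - A) = t := by
    rw [ht]
    have hset : specSet (M - A) = specSet (A - M) := by
      unfold specSet
      apply Set.eq_of_subset_of_subset <;>
      · rintro r ⟨x, hx, rfl⟩
        refine ⟨x, hx, ?_⟩
        congr 1
        apply Finset.sum_congr rfl
        intro i _
        rw [← neg_sq]
        congr 1
        rw [← Finset.sum_neg_distrib]
        apply Finset.sum_congr rfl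
        intro j _
        simp [Matrix.sub_apply]
        ring
    rw [specNorm_eq, specNorm_eq, hset]
  have hs : specNorm (M - Ahat) ≤ (1 + C₁) * t := by
    calc specNorm (M - Ahat) ≤ specNorm (M - A) + specNorm (A - Ahat) := htri
      _ ≤ t + C₁ * t := by rw [hMA]; exact add_le_add le_rfl hAAhat
      _ = (1 + C₁) * t := by ring
  have hsnn : 0 ≤ specNorm (M - Ahat) := specNorm_nonneg _
  have hrk : ((M - Ahat).rank : ℝ) ≤ 2 * K := by
    have h1 : (M - Ahat).rank ≤ M.rank + Ahat.rank := rank_sub_le M Ahat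
    have h2 : M.rank + Ahat.rank ≤ 2 * K := by omega
    exact_mod_cast h1.trans h2
  have hfrob : frobSq (M - Ahat) ≤ ((M - Ahat).rank : ℝ) * specNorm (M - Ahat) ^ 2 :=
    frobSq_le_rank_mul _
  have hrnn : (0:ℝ) ≤ ((M - Ahat).rank : ℝ) := Nat.cast_nonneg _
  have hs2 : specNorm (M - Ahat) ^ 2 ≤ ((1 + C₁) * t) ^ 2 :=
    pow_le_pow_left₀ hsnn hs _
  have hKnn : (0:ℝ) ≤ (K:ℝ) := Nat.cast_nonneg _
  calc frobSq (M - Ahat) ≤ ((M - Ahat).rank : ℝ) * specNorm (M - Ahat) ^ 2 := hfrob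
    _ ≤ (2 * K) * specNorm (M - Ahat) ^ 2 :=
        mul_le_mul_of_nonneg_right hrk (sq_nonneg _)
    _ ≤ (2 * K) * ((1 + C₁) * t) ^ 2 := by
        apply mul_le_mul_of_nonneg_left hs2
        positivity
    _ ≤ 4 * K * (1 + C₁ ^ 2) * t ^ 2 := by
        nlinarith [mul_nonneg (mul_nonneg hKnn (sq_nonneg (1 - C₁))) (sq_nonneg t)]
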